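/- Let I, J ⊆ Δ and let w ∈ W be such that w^{-1}(α) ∈ Φ^+ for every α ∈ I and w(β) ∈ Φ^+ for every β ∈ J. Then Φ_I ∩ w(Φ^+ \ Φ_J^+) = Φ_I^+ \ Φ_{I ∩ w(J)}^+. -/

import Mathlib

open scoped Classical

section stmt7aux
variable {V : Type*} [AddCommGroup V] [Module ℝ V]

lemma stmt7_exists_coords (Δ : Set V)
    (hindep : LinearIndependent ℝ (fun a : Δ => (a : V))) :
    ∃ g : Δ → (V →ₗ[ℝ] ℝ), ∀ δ α : Δ, g δ α = if α = δ then 1 else 0 := by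
  replace hindep : LinearIndepOn ℝ id Δ := hindep
  have hsub : Δ ⊆ hindep.extend (Set.subset_univ Δ) := hindep.subset_extend _
  let B := Module.Basis.extend hindep
  refine ⟨fun δ => B.coord ⟨(δ : V), hsub δ.2⟩, fun δ α => ?_⟩
  have : (α : V) = B ⟨(α : V), hsub α.2⟩ := (Module.Basis.extend_apply_self hindep ⟨_, _⟩).symm
  rw [this, Module.Basis.coord_apply, Module.Basis.repr_self, Finsupp.single_apply]
  simp [Subtype.ext_iff]

lemma stmt7_g_nn {Δ : Set V} {g : Δ → (V →ₗ[ℝ] ℝ)}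
    (hg : ∀ δ α : Δ, g δ α = if α = δ then 1 else 0)
    (c : Δ →₀ ℕ) (δ : Δ) :
    g δ (c.sum fun β m => m • (β : V)) = (c δ : ℝ) := by
  rw [map_finsuppSum]
  have h1 : ∀ (β : Δ) (m : ℕ), g δ ((m : ℕ) • (β : V)) = if β = δ then (m : ℝ) else 0 := by
    intro β m
    rw [map_nsmul, hg]
    by_cases h : β = δ <;> simp [h]
  simp_rw [h1]
  rw [Finsupp.sum_ite_eq' c δ (fun _ m => (m : ℝ))]
  by_cases h : δ ∈ c.support
  · simp [h]
  · rw [if_neg h, Finsupp.notMem_support_iff.mp h, Nat.cast_zero]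

lemma stmt7_g_span {Δ : Set V} {g : Δ → (V →ₗ[ℝ] ℝ)}
    (hg : ∀ δ α : Δ, g δ α = if α = δ then 1 else 0)
    {K : Set V} (hK : K ⊆ Δ) (δ : Δ) (hδ : (δ : V) ∉ K)
    {v : V} (hv : v ∈ Submodule.span ℝ K) : g δ v = 0 := by
  have hle : Submodule.span ℝ K ≤ LinearMap.ker (g δ) := by
    rw [Submodule.span_le]
    intro x hx
    have hxΔ : x ∈ Δ := hK hx
    have h2 := hg δ ⟨x, hxΔ⟩
    simp only [SetLike.mem_coe, LinearMap.mem_ker]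
    rw [show x = ((⟨x, hxΔ⟩ : Δ) : V) from rfl, h2, if_neg]
    intro h
    exact hδ (by rw [← congrArg Subtype.val h]; exact hx)
  exact hle hv

lemma stmt7_f_nn {Δ : Set V} {f : V →ₗ[ℝ] ℝ} (hf1 : ∀ α : Δ, f ↑α = 1) (c : Δ →₀ ℕ) :
    f (c.sum fun β m => m • (β : V)) = c.sum fun _ m => (m : ℝ) := by
  rw [map_finsuppSum]
  exact Finsupp.sum_congr fun α _ => by rw [map_nsmul, nsmul_eq_mul, hf1, mul_one]

end stmt7aux

theorem stmt_7 {V : Type*} [AddCommGroup V] [Module ℝ V]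
    (Φ : Set V) (hΦfin : Φ.Finite) (hΦ0 : (0 : V) ∉ Φ)
    (Δ : Set V) (hΔΦ : Δ ⊆ Φ)
    (hΔindep : LinearIndependent ℝ (fun a : Δ => (a : V)))
    (Pos : Set V)
    (hPos : Pos = {α ∈ Φ | ∃ c : Δ →₀ ℕ, α = c.sum fun β m => m • (β : V)})
    (hsign : ∀ α ∈ Φ, (∃ c : Δ →₀ ℕ, α = c.sum fun β m => m • (β : V)) ∨
        (∃ c : Δ →₀ ℕ, α = -(c.sum fun β m => m • (β : V))))
    (w : V ≃ₗ[ℝ] V) (hw : ∀ v : V, v ∈ Φ ↔ w v ∈ Φ)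
    (I J : Set V) (hI : I ⊆ Δ) (hJ : J ⊆ Δ)
    (hwI : ∀ α ∈ I, w.symm α ∈ Pos) (hwJ : ∀ β ∈ J, w β ∈ Pos) :
    (Φ ∩ (Submodule.span ℤ I : Set V)) ∩
        (⇑w '' (Pos \ ((Φ ∩ (Submodule.span ℤ J : Set V)) ∩ Pos))) =
      ((Φ ∩ (Submodule.span ℤ I : Set V)) ∩ Pos) \
        ((Φ ∩ (Submodule.span ℤ (I ∩ ⇑w '' J) : Set V)) ∩ Pos) := by
  subst hPos
  haveI : Fintype Δ := (hΦfin.subset hΔΦ).fintype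
  obtain ⟨g, hg⟩ := stmt7_exists_coords Δ hΔindep
  set f : V →ₗ[ℝ] ℝ := ∑ δ : Δ, g δ with hfdef
  have hf1 : ∀ α : Δ, f ↑α = 1 := by
    intro α
    rw [hfdef, LinearMap.sum_apply]
    have h1 : ∀ δ : Δ, g δ ↑α = if α = δ then (1 : ℝ) else 0 := fun δ => hg δ α
    simp_rw [h1]
    rw [Finset.sum_ite_eq Finset.univ α (fun _ => (1 : ℝ))]
    simp
  have hne : ∀ v ∈ Φ, v ≠ 0 := fun v hv h0 => hΦ0 (h0 ▸ hv)
  have hcne : ∀ c : Δ →₀ ℕ, (c.sum fun β m => m • (β : V)) ∈ Φ → c ≠ 0 := by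
    intro c hc h0
    apply hΦ0
    simpa [h0] using hc
  have hfge1 : ∀ c : Δ →₀ ℕ, c ≠ 0 → 1 ≤ f (c.sum fun β m => m • (β : V)) := by
    intro c hc
    rw [stmt7_f_nn hf1]
    obtain ⟨δ, hδ⟩ := Finsupp.support_nonempty_iff.mpr hc
    rw [Finsupp.sum]
    have h1 : (1 : ℝ) ≤ (c δ : ℝ) := by
      exact_mod_cast Nat.one_le_iff_ne_zero.mpr (Finsupp.mem_support_iff.mp hδ)
    exact le_trans h1 (Finset.single_le_sum (f := fun a : Δ => (c a : ℝ))
      (fun i _ => by positivity) hδ)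
  have hfPos : ∀ v ∈ Φ, (∃ c : Δ →₀ ℕ, v = c.sum fun β m => m • (β : V)) → 1 ≤ f v := by
    rintro v hv ⟨c, rfl⟩
    exact hfge1 c (hcne c hv)
  have hspanle : ∀ (K : Set V) (v : V), v ∈ (Submodule.span ℤ K : Set V) →
      v ∈ Submodule.span ℝ K := fun K v hv => Submodule.span_subset_span ℤ ℝ K hv
  have hsupp : ∀ (K : Set V), K ⊆ Δ → ∀ c : Δ →₀ ℕ,
      (c.sum fun β m => m • (β : V)) ∈ Submodule.span ℝ K →
      ∀ δ : Δ, (δ : V) ∉ K → c δ = 0 := by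
    intro K hK c hc δ hδ
    have h1 := stmt7_g_nn hg c δ
    rw [stmt7_g_span hg hK δ hδ hc] at h1
    exact_mod_cast h1.symm
  -- the additive submonoid of nonnegative combinations
  let NN : AddSubmonoid V :=
    { carrier := {v | ∃ c : Δ →₀ ℕ, v = c.sum fun β m => m • (β : V)}
      add_mem' := by
        rintro x y ⟨c₁, rfl⟩ ⟨c₂, rfl⟩
        exact ⟨c₁ + c₂, (Finsupp.sum_add_index' (h := fun (β : Δ) (m : ℕ) => m • (β : V))
          (fun a => zero_nsmul _) (fun a b₁ b₂ => add_nsmul _ b₁ b₂)).symm⟩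
      zero_mem' := ⟨0, by simp⟩ }
  have hNNsum : ∀ (c : Δ →₀ ℕ) (u : Δ → V), (∀ α ∈ c.support, u α ∈ NN) →
      (c.sum fun α m => m • u α) ∈ NN := by
    intro c u hu
    rw [Finsupp.sum]
    exact AddSubmonoid.sum_mem NN fun α hα => nsmul_mem (hu α hα) _
  -- key claim : an element of w(J) that is a nonneg combination supported in I lies in I
  have hkey : ∀ δ : Δ, (w ↑δ : V) ∈ Φ → ∀ n : Δ →₀ ℕ,
      (w ↑δ : V) = n.sum (fun β m => m • (β : V)) → (∀ α ∈ n.support, (α : V) ∈ I) →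
      (w ↑δ : V) ∈ I := by
    intro δ hwδΦ n hn hnI
    have hδeq : (δ : V) = n.sum fun α m => m • (w.symm ↑α) := by
      have h4 := congrArg w.symm hn
      rw [w.symm_apply_apply, map_finsuppSum] at h4
      rw [h4]
      exact Finsupp.sum_congr fun α _ => map_nsmul _ _ _
    have hfδ : (n.sum fun α m => (m : ℝ) * f (w.symm ↑α)) = 1 := by
      have h2 : f ↑δ = n.sum fun α m => (m : ℝ) * f (w.symm ↑α) := by
        rw [hδeq, map_finsuppSum]
        exact Finsupp.sum_congr fun α _ => by rw [map_nsmul, nsmul_eq_mul]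
      rw [← h2, hf1 δ]
    have hn0 : n ≠ 0 := by
      intro h0
      apply hne _ hwδΦ
      rw [hn, h0]
      simp
    set S : ℕ := n.sum fun _ m => m with hS
    have hle1 : (S : ℝ) ≤ 1 := by
      have hcast : (S : ℝ) = n.sum fun _ m => (m : ℝ) := by
        rw [hS]
        simp only [Finsupp.sum]
        rw [Nat.cast_sum]
      rw [hcast, ← hfδ, Finsupp.sum, Finsupp.sum]
      refine Finset.sum_le_sum fun α hα => ?_
      obtain ⟨hΦ', hex⟩ := hwI ↑α (hnI α hα)
      have hge : 1 ≤ f (w.symm ↑α) := hfPos _ hΦ' hex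
      exact le_mul_of_one_le_right (by positivity) hge
    have hge1 : 1 ≤ S := by
      rcases Nat.eq_zero_or_pos S with h | h
      · exfalso
        apply hn0
        have hsum0 : ∑ i ∈ n.support, n i = 0 := by rw [hS] at h; exact h
        have h5 := (Finset.sum_eq_zero_iff_of_nonneg
          (fun (i : Δ) _ => Nat.zero_le (n i))).mp hsum0
        ext α
        by_cases hα : α ∈ n.support
        · exact h5 α hα
        · exact Finsupp.notMem_support_iff.mp hα
      · exact h
    have hS1 : S = 1 := le_antisymm (by exact_mod_cast hle1) hge1
    have hcard : n.support.card = 1 := by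
      have hle : n.support.card ≤ S := by
        rw [hS, Finsupp.sum, Finset.card_eq_sum_ones]
        exact Finset.sum_le_sum fun α hα =>
          Nat.one_le_iff_ne_zero.mpr (Finsupp.mem_support_iff.mp hα)
      have hpos : 0 < n.support.card :=
        Finset.card_pos.mpr (Finsupp.support_nonempty_iff.mpr hn0)
      omega
    obtain ⟨α₀, hα₀⟩ := Finset.card_eq_one.mp hcard
    have hmem : α₀ ∈ n.support := by rw [hα₀]; exact Finset.mem_singleton_self _
    have hnval : n α₀ = 1 := by
      have h6 : S = n α₀ := by rw [hS, Finsupp.sum, hα₀, Finset.sum_singleton]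
      omega
    have h7 : (w ↑δ : V) = ↑α₀ := by
      rw [hn, Finsupp.sum, hα₀, Finset.sum_singleton, hnval, one_smul]
    rw [h7]
    exact hnI α₀ hmem
  -- transfer of span under w.symm
  have hspanJ : ∀ v ∈ Submodule.span ℤ (I ∩ ⇑w '' J), w.symm v ∈ Submodule.span ℤ J := by
    intro v hv
    induction hv using Submodule.span_induction with
    | mem x hx =>
      obtain ⟨_, y, hyJ, rfl⟩ := hx
      rw [w.symm_apply_apply]
      exact Submodule.subset_span hyJ
    | zero => simp
    | add x y hx hy ihx ihy => rw [map_add]; exact Submodule.add_mem _ ihx ihy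
    | smul a x hx ih => rw [map_zsmul]; exact Submodule.smul_mem _ a ih
  ext γ
  constructor
  · rintro ⟨⟨hγΦ, hγI⟩, β, ⟨⟨hβΦ, cβ, hcβ⟩, hβnot⟩, rfl⟩
    have hβJ : β ∉ (Submodule.span ℤ J : Set V) := fun h => hβnot ⟨⟨hβΦ, h⟩, hβΦ, cβ, hcβ⟩
    have hwβPos : ∃ c : Δ →₀ ℕ, w β = c.sum fun b m => m • (b : V) := by
      rcases hsign (w β) hγΦ with h | ⟨c, hc⟩
      · exact h
      · exfalso
        have hsuppc : ∀ δ : Δ, (δ : V) ∉ I → c δ = 0 := by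
          intro δ hδ
          have h1 : g δ (w β) = -(c δ : ℝ) := by rw [hc, map_neg, stmt7_g_nn hg]
          rw [stmt7_g_span hg hI δ hδ (hspanle I _ hγI)] at h1
          exact_mod_cast neg_eq_zero.mp h1.symm
        have hβeq : β = -(c.sum fun α m => m • (w.symm ↑α)) := by
          have h4 := congrArg w.symm hc
          rw [w.symm_apply_apply, map_neg, map_finsuppSum] at h4
          rw [h4]
          congr 1
          exact Finsupp.sum_congr fun α _ => map_nsmul _ _ _
        have h5 : f β = -(c.sum fun α m => (m : ℝ) * f (w.symm ↑α)) := by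
          rw [hβeq, map_neg, map_finsuppSum]
          congr 1
          exact Finsupp.sum_congr fun α _ => by rw [map_nsmul, nsmul_eq_mul]
        have h6 : 0 ≤ c.sum fun α m => (m : ℝ) * f (w.symm ↑α) := by
          rw [Finsupp.sum]
          refine Finset.sum_nonneg fun α hα => ?_
          have hαI : (α : V) ∈ I := by
            by_contra hbad
            exact Finsupp.mem_support_iff.mp hα (hsuppc α hbad)
          obtain ⟨hΦ', hex⟩ := hwI ↑α hαI
          have h7 := hfPos _ hΦ' hex
          exact mul_nonneg (by positivity) (by linarith)
        have h8 := hfPos β hβΦ ⟨cβ, hcβ⟩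
        rw [h5] at h8
        linarith
    refine ⟨⟨⟨hγΦ, hγI⟩, ⟨hγΦ, hwβPos⟩⟩, ?_⟩
    rintro ⟨⟨_, hsp⟩, _⟩
    exact hβJ (by simpa using hspanJ _ hsp)
  · rintro ⟨⟨⟨hγΦ, hγI⟩, hγΦ', c, hc⟩, hnot⟩
    have hγK : γ ∉ (Submodule.span ℤ (I ∩ ⇑w '' J) : Set V) :=
      fun h => hnot ⟨⟨hγΦ, h⟩, hγΦ, c, hc⟩
    have hsuppI : ∀ α ∈ c.support, (α : V) ∈ I := by
      intro α hα
      by_contra hbad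
      exact Finsupp.mem_support_iff.mp hα (hsupp I hI c (hc ▸ hspanle I _ hγI) α hbad)
    set β := w.symm γ with hβdef
    have hβΦ : β ∈ Φ := (hw β).mpr (by rw [hβdef, w.apply_symm_apply]; exact hγΦ)
    have hβeq : β = c.sum fun α m => m • (w.symm ↑α) := by
      rw [hβdef, hc, map_finsuppSum]
      exact Finsupp.sum_congr fun α _ => map_nsmul _ _ _
    have hβNN : ∃ e : Δ →₀ ℕ, β = e.sum fun b m => m • (b : V) := by
      have h1 : β ∈ NN := by
        rw [hβeq]
        exact hNNsum c _ fun α hα => (hwI ↑α (hsuppI α hα)).2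
      exact h1
    have hβJ : β ∉ (Submodule.span ℤ J : Set V) := by
      intro hsp
      apply hγK
      obtain ⟨e, he⟩ := hβNN
      have hsuppJ : ∀ δ ∈ e.support, (δ : V) ∈ J := by
        intro δ hδ
        by_contra hbad
        exact Finsupp.mem_support_iff.mp hδ (hsupp J hJ e (he ▸ hspanle J _ hsp) δ hbad)
      have hγe : γ = e.sum fun δ m => m • (w ↑δ : V) := by
        have h1 : γ = w β := by rw [hβdef, w.apply_symm_apply]
        rw [h1, he, map_finsuppSum]
        exact Finsupp.sum_congr fun δ _ => map_nsmul _ _ _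
      rw [show γ ∈ (Submodule.span ℤ (I ∩ ⇑w '' J) : Set V) ↔
        γ ∈ Submodule.span ℤ (I ∩ ⇑w '' J) from Iff.rfl, hγe, Finsupp.sum]
      refine Submodule.sum_mem _ fun δ hδ => ?_
      obtain ⟨hwδΦ, nδ, hnδ⟩ := hwJ ↑δ (hsuppJ δ hδ)
      have hwδI : (w ↑δ : V) ∈ I := by
        apply hkey δ hwδΦ nδ hnδ
        intro α hα
        by_contra hbad
        apply Finsupp.mem_support_iff.mp hα
        have h0 : g α γ = 0 := stmt7_g_span hg hI α hbad (hspanle I _ hγI)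
        rw [hγe, map_finsuppSum, Finsupp.sum] at h0
        have hterm : ∀ δ' ∈ e.support,
            g α ((e δ') • (w ↑δ' : V)) = (e δ' : ℝ) * g α (w ↑δ') := fun δ' _ => by
          rw [map_nsmul, nsmul_eq_mul]
        rw [Finset.sum_congr rfl hterm] at h0
        have hnonneg : ∀ δ' ∈ e.support, 0 ≤ (e δ' : ℝ) * g α (w ↑δ') := by
          intro δ' hδ'
          obtain ⟨hΦ', n', hn'⟩ := hwJ ↑δ' (hsuppJ δ' hδ')
          rw [hn', stmt7_g_nn hg]
          positivity
        have h9 := (Finset.sum_eq_zero_iff_of_nonneg hnonneg).mp h0 δ hδ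
        rw [hnδ, stmt7_g_nn hg] at h9
        have h10 : (e δ : ℝ) ≠ 0 := by
          exact_mod_cast Finsupp.mem_support_iff.mp hδ
        have := mul_eq_zero.mp h9
        rcases this with h | h
        · exact absurd h h10
        · exact_mod_cast h
      have hmemK : (w ↑δ : V) ∈ I ∩ ⇑w '' J := ⟨hwδI, ⟨(↑δ : V), hsuppJ δ hδ, rfl⟩⟩
      exact nsmul_mem (Submodule.subset_span hmemK) _
    refine ⟨⟨hγΦ, hγI⟩, β, ⟨⟨hβΦ, hβNN⟩, ?_⟩, by rw [hβdef, w.apply_symm_apply]⟩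
    rintro ⟨⟨_, hsp⟩, _⟩
    exact hβJ hsp
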